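/- Lipschitz control of a C¹_H map whose differential is near the identity: let f : ℍₙ → ℝ^(2n) be of class C¹_H, let c > 0, and let B = B_R(p) ⊆ ℍₙ be a Korányi ball such that ‖D_H f_q − id‖_op < c for all q ∈ B_{5R}(p). Then for all x, y ∈ B, |(f(x) − π(x)) − (f(y) − π(y))| ≤ 3 c d(x,y). -/

import Mathlib

open MeasureTheory Set Filter Topology
open scoped ENNReal

noncomputable section

/-- Euclidean space `ℝ^(2n)`, the horizontal layer. -/
abbrev E (n : ℕ) : Type := EuclideanSpace ℝ (Fin (2 * n))

/-- The Heisenberg group `ℍₙ` as a set: `ℝ^(2n) × ℝ`. -/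
abbrev Hpt (n : ℕ) : Type := E n × ℝ

/-- The standard symplectic form on `ℝ^(2n)` with coordinates `(x₁,y₁,…,xₙ,yₙ)`. -/
def omegaF (n : ℕ) (u v : E n) : ℝ :=
  ∑ i : Fin n,
    (u ⟨2 * i.1, by have := i.isLt; omega⟩ * v ⟨2 * i.1 + 1, by have := i.isLt; omega⟩
     - v ⟨2 * i.1, by have := i.isLt; omega⟩ * u ⟨2 * i.1 + 1, by have := i.isLt; omega⟩)

/-- The Heisenberg group law. -/
def hmul (n : ℕ) (a b : Hpt n) : Hpt n :=
  (a.1 + b.1, a.2 + b.2 + (1 / 2) * omegaF n a.1 b.1)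

/-- The Heisenberg group inverse. -/
def hinv (n : ℕ) (a : Hpt n) : Hpt n := (-a.1, -a.2)

/-- The Korányi norm. -/
def kor (n : ℕ) (q : Hpt n) : ℝ := (‖q.1‖ ^ 4 + 16 * q.2 ^ 2) ^ ((1 : ℝ) / 4)

/-- The Korányi (left-invariant, homogeneous) distance. -/
def dK (n : ℕ) (p q : Hpt n) : ℝ := kor n (hmul n (hinv n p) q)

/-- `f` is Pansu differentiable at `x` with horizontal differential `L`. -/
def PansuDiffAt (n : ℕ) (f : Hpt n → E n) (x : Hpt n) (L : E n →L[ℝ] E n) : Prop :=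
  ∀ ε > (0 : ℝ), ∃ δ > (0 : ℝ), ∀ y : Hpt n, dK n x y < δ →
    ‖f y - f x - L ((hmul n (hinv n x) y).1)‖ ≤ ε * dK n x y

/-- `f` is of class `C¹_H` with horizontal differential `D`: it is Pansu differentiable
everywhere and `x ↦ D_H f_x` is continuous in the operator norm (w.r.t. the Korányi metric). -/
def C1H (n : ℕ) (f : Hpt n → E n) (D : Hpt n → (E n →L[ℝ] E n)) : Prop :=
  (∀ x, PansuDiffAt n f x (D x)) ∧
  (∀ x, ∀ ε > (0 : ℝ), ∃ δ > (0 : ℝ), ∀ y : Hpt n, dK n x y < δ → ‖D y - D x‖ < ε)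

/-! ### Auxiliary lemmas -/

section Aux

lemma omegaF_add_left (n : ℕ) (a b c : E n) : omegaF n (a + b) c = omegaF n a c + omegaF n b c := by
  unfold omegaF
  rw [← Finset.sum_add_distrib]
  refine Finset.sum_congr rfl fun i _ => ?_
  simp [PiLp.add_apply]; ring

lemma omegaF_add_right (n : ℕ) (a b c : E n) : omegaF n a (b + c) = omegaF n a b + omegaF n a c := by
  unfold omegaF
  rw [← Finset.sum_add_distrib]
  refine Finset.sum_congr rfl fun i _ => ?_
  simp [PiLp.add_apply]; ring

lemma omegaF_neg_left (n : ℕ) (a b : E n) : omegaF n (-a) b = - omegaF n a b := by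
  unfold omegaF
  rw [← Finset.sum_neg_distrib]
  refine Finset.sum_congr rfl fun i _ => ?_
  simp [PiLp.neg_apply]; ring

lemma omegaF_neg_right (n : ℕ) (a b : E n) : omegaF n a (-b) = - omegaF n a b := by
  unfold omegaF
  rw [← Finset.sum_neg_distrib]
  refine Finset.sum_congr rfl fun i _ => ?_
  simp [PiLp.neg_apply]; ring

lemma omegaF_smul_left (n : ℕ) (r : ℝ) (a b : E n) : omegaF n (r • a) b = r * omegaF n a b := by
  unfold omegaF
  rw [Finset.mul_sum]
  refine Finset.sum_congr rfl fun i _ => ?_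
  simp [PiLp.smul_apply, smul_eq_mul]; ring

lemma omegaF_smul_right (n : ℕ) (r : ℝ) (a b : E n) : omegaF n a (r • b) = r * omegaF n a b := by
  unfold omegaF
  rw [Finset.mul_sum]
  refine Finset.sum_congr rfl fun i _ => ?_
  simp [PiLp.smul_apply, smul_eq_mul]; ring

lemma omegaF_self (n : ℕ) (a : E n) : omegaF n a a = 0 := by
  unfold omegaF; simp

lemma omegaF_antisymm (n : ℕ) (a b : E n) : omegaF n a b = - omegaF n b a := by
  unfold omegaF
  rw [← Finset.sum_neg_distrib]
  refine Finset.sum_congr rfl fun i _ => ?_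
  ring

lemma omegaF_zero_left (n : ℕ) (b : E n) : omegaF n 0 b = 0 := by
  unfold omegaF; simp

lemma omegaF_zero_right (n : ℕ) (a : E n) : omegaF n a 0 = 0 := by
  unfold omegaF; simp

lemma hmul_assoc (n : ℕ) (a b c : Hpt n) :
    hmul n (hmul n a b) c = hmul n a (hmul n b c) := by
  unfold hmul
  refine Prod.ext (by simp [add_assoc]) ?_
  simp [omegaF_add_left, omegaF_add_right]
  ring

lemma hmul_zero (n : ℕ) (a : Hpt n) : hmul n a 0 = a := by
  unfold hmul
  refine Prod.ext (by simp) ?_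
  have : (0 : Hpt n).1 = 0 := rfl
  simp [this, omegaF_zero_right]

lemma zero_hmul (n : ℕ) (a : Hpt n) : hmul n 0 a = a := by
  unfold hmul
  refine Prod.ext (by simp) ?_
  have : (0 : Hpt n).1 = 0 := rfl
  simp [this, omegaF_zero_left]

lemma hmul_hinv (n : ℕ) (a : Hpt n) : hmul n a (hinv n a) = 0 := by
  unfold hmul hinv
  refine Prod.ext (by simp) ?_
  simp [omegaF_neg_right, omegaF_self]

lemma hinv_hmul (n : ℕ) (a : Hpt n) : hmul n (hinv n a) a = 0 := by
  unfold hmul hinv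
  refine Prod.ext (by simp) ?_
  simp [omegaF_neg_left, omegaF_self]

lemma hmul_hinv_cancel_left (n : ℕ) (x y : Hpt n) :
    hmul n x (hmul n (hinv n x) y) = y := by
  rw [← hmul_assoc, hmul_hinv, zero_hmul]

lemma pow4_rpow (w : ℝ) (hw : 0 ≤ w) : ((w ^ 4) : ℝ) ^ ((1:ℝ)/4) = w := by
  rw [← Real.rpow_natCast w 4, ← Real.rpow_mul hw]; norm_num

def pairIdx (n : ℕ) (x : Fin n × Fin 2) : Fin (2*n) :=
  ⟨2*x.1.1 + x.2.1, by have := x.1.isLt; have := x.2.isLt; omega⟩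

lemma pairIdx_bij (n : ℕ) : Function.Bijective (pairIdx n) := by
  constructor
  · rintro ⟨⟨j,hj⟩,⟨b,hb⟩⟩ ⟨⟨j',hj'⟩,⟨b',hb'⟩⟩ h
    simp only [pairIdx, Fin.mk.injEq] at h
    have : j = j' ∧ b = b' := by omega
    simp [this.1, this.2]
  · rintro ⟨k, hk⟩
    exact ⟨⟨⟨k/2, by omega⟩, ⟨k % 2, by omega⟩⟩, by simp only [pairIdx]; congr 1; omega⟩

lemma sum_pair (n : ℕ) (g : Fin (2*n) → ℝ) :
    ∑ i, g i = ∑ j : Fin n, (g ⟨2*j.1, by have := j.isLt; omega⟩ + g ⟨2*j.1+1, by have := j.isLt; omega⟩) := by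
  rw [← Function.Bijective.sum_comp (pairIdx_bij n) g, Fintype.sum_prod_type]
  refine Finset.sum_congr rfl fun j _ => ?_
  rw [Fin.sum_univ_two]
  congr 1

def cpx (n : ℕ) (u : E n) : EuclideanSpace ℂ (Fin n) :=
  WithLp.toLp 2 (fun j => (⟨u ⟨2*j.1, by have := j.isLt; omega⟩, u ⟨2*j.1+1, by have := j.isLt; omega⟩⟩ : ℂ))

lemma norm_cpx (n : ℕ) (u : E n) : ‖cpx n u‖ = ‖u‖ := by
  rw [EuclideanSpace.norm_eq, EuclideanSpace.norm_eq]
  congr 1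
  rw [sum_pair n (fun i => ‖u i‖^2)]
  refine Finset.sum_congr rfl fun j _ => ?_
  simp [cpx, Complex.sq_norm, Complex.normSq_mk, Real.norm_eq_abs, sq_abs]
  ring

lemma inner_cpx_re (n : ℕ) (u v : E n) :
    (inner (𝕜 := ℂ) (cpx n u) (cpx n v)).re = inner (𝕜 := ℝ) u v := by
  rw [PiLp.inner_apply, PiLp.inner_apply]
  rw [sum_pair n (fun i => inner (𝕜 := ℝ) (u i) (v i))]
  rw [Complex.re_sum]
  refine Finset.sum_congr rfl fun j _ => ?_
  simp [cpx, RCLike.inner_apply, Complex.mul_re]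

lemma inner_cpx_im (n : ℕ) (u v : E n) :
    (inner (𝕜 := ℂ) (cpx n u) (cpx n v)).im = omegaF n u v := by
  rw [PiLp.inner_apply, Complex.im_sum]
  unfold omegaF
  refine Finset.sum_congr rfl fun j _ => ?_
  simp [cpx, RCLike.inner_apply, Complex.mul_im]
  ring

lemma cs_omega (n : ℕ) (u v : E n) :
    (inner (𝕜 := ℝ) u v)^2 + (omegaF n u v)^2 ≤ (‖u‖ * ‖v‖)^2 := by
  have h := norm_inner_le_norm (𝕜 := ℂ) (cpx n u) (cpx n v)
  rw [norm_cpx, norm_cpx] at h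
  have h2 : ‖inner (𝕜 := ℂ) (cpx n u) (cpx n v)‖^2 ≤ (‖u‖ * ‖v‖)^2 := by
    apply sq_le_sq' _ h
    nlinarith [norm_nonneg (inner (𝕜 := ℂ) (cpx n u) (cpx n v))]
  calc (inner (𝕜 := ℝ) u v)^2 + (omegaF n u v)^2
      = ‖inner (𝕜 := ℂ) (cpx n u) (cpx n v)‖^2 := by
        rw [← inner_cpx_re n u v, ← inner_cpx_im n u v]
        rw [Complex.sq_norm, Complex.normSq_apply]
        ring
    _ ≤ (‖u‖ * ‖v‖)^2 := h2

lemma kor_arg_nonneg (n : ℕ) (q : Hpt n) : 0 ≤ ‖q.1‖ ^ 4 + 16 * q.2 ^ 2 := by positivity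

lemma kor_nonneg (n : ℕ) (q : Hpt n) : 0 ≤ kor n q :=
  Real.rpow_nonneg (kor_arg_nonneg n q) _

lemma kor_sq (n : ℕ) (q : Hpt n) : (kor n q)^2 = Real.sqrt (‖q.1‖ ^ 4 + 16 * q.2 ^ 2) := by
  rw [kor, ← Real.rpow_natCast (_ ^ ((1:ℝ)/4)) 2, ← Real.rpow_mul (kor_arg_nonneg n q),
    Real.sqrt_eq_rpow]
  norm_num

lemma kor_fst_le (n : ℕ) (q : Hpt n) : ‖q.1‖ ≤ kor n q := by
  rw [kor]
  calc ‖q.1‖ = (‖q.1‖^4) ^ ((1:ℝ)/4) := (pow4_rpow _ (norm_nonneg _)).symm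
    _ ≤ _ := by
        apply Real.rpow_le_rpow (by positivity) (by nlinarith [sq_nonneg q.2]) (by norm_num)

lemma kor_snd_le (n : ℕ) (q : Hpt n) : 2 * Real.sqrt |q.2| ≤ kor n q := by
  rw [kor]
  have h4 : (2 * Real.sqrt |q.2|)^4 = 16 * q.2^2 := by
    have : Real.sqrt |q.2| ^ 4 = (Real.sqrt |q.2| ^ 2)^2 := by ring
    rw [mul_pow, this, Real.sq_sqrt (abs_nonneg _), sq_abs]
    norm_num
  calc 2 * Real.sqrt |q.2| = ((2 * Real.sqrt |q.2|)^4) ^ ((1:ℝ)/4) := by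
        rw [pow4_rpow _ (by positivity)]
    _ ≤ _ := by
        apply Real.rpow_le_rpow (by positivity) _ (by norm_num)
        rw [h4]; nlinarith [pow_nonneg (norm_nonneg q.1) 4]

lemma kor_horizontal (n : ℕ) (w : E n) : kor n (w, (0:ℝ)) = ‖w‖ := by
  rw [kor]
  simp only [ne_eq, OfNat.ofNat_ne_zero, not_false_eq_true, zero_pow, mul_zero, add_zero]
  exact pow4_rpow _ (norm_nonneg _)

lemma abs_mk (x y : ℝ) : ‖(⟨x, y⟩ : ℂ)‖ = Real.sqrt (x^2 + y^2) := by
  rw [Complex.norm_def, Complex.normSq_mk]; ring_nf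

lemma kor_hmul_le (n : ℕ) (a b : Hpt n) : kor n (hmul n a b) ≤ kor n a + kor n b := by
  set u := a.1 with hu; set v := b.1 with hv
  set P : ℝ := inner (𝕜 := ℝ) u v with hP
  set W : ℝ := omegaF n u v with hW
  set z : ℝ := a.2 + b.2 + (1/2) * W with hz
  set K := kor n a + kor n b with hK
  have hK0 : 0 ≤ K := add_nonneg (kor_nonneg n a) (kor_nonneg n b)
  have h1 : (⟨‖u‖^2, 4*a.2⟩ : ℂ) + ⟨‖v‖^2, 4*b.2⟩ + ⟨2*P, 2*W⟩ = (⟨‖u+v‖^2, 4*z⟩ : ℂ) := by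
    apply Complex.ext
    · simp only [Complex.add_re]
      rw [norm_add_sq_real, ← hP]
      ring
    · simp [Complex.add_im]
      rw [hz]; ring
  have h3 : ‖(⟨2*P, 2*W⟩ : ℂ)‖ ≤ 2 * (‖u‖ * ‖v‖) := by
    rw [abs_mk]
    have : (2*P)^2 + (2*W)^2 ≤ (2 * (‖u‖ * ‖v‖))^2 := by nlinarith [cs_omega n u v]
    calc Real.sqrt ((2*P)^2 + (2*W)^2) ≤ Real.sqrt ((2 * (‖u‖ * ‖v‖))^2) :=
          Real.sqrt_le_sqrt this
      _ = 2 * (‖u‖ * ‖v‖) := Real.sqrt_sq (by positivity)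
  have h4a : ‖(⟨‖u‖^2, 4*a.2⟩ : ℂ)‖ = (kor n a)^2 := by
    rw [abs_mk, kor_sq]; congr 1; ring
  have h4b : ‖(⟨‖v‖^2, 4*b.2⟩ : ℂ)‖ = (kor n b)^2 := by
    rw [abs_mk, kor_sq]; congr 1; ring
  have h5 : Real.sqrt (‖u+v‖^4 + 16*z^2) ≤ K^2 := by
    have e1 : Real.sqrt (‖u+v‖^4 + 16*z^2) = ‖(⟨‖u+v‖^2, 4*z⟩ : ℂ)‖ := by
      rw [abs_mk]; congr 1; ring
    rw [e1, ← h1]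
    have tri : ‖(⟨‖u‖^2, 4*a.2⟩ + ⟨‖v‖^2, 4*b.2⟩ + ⟨2*P, 2*W⟩ : ℂ)‖
        ≤ ‖(⟨‖u‖^2, 4*a.2⟩ : ℂ)‖ + ‖(⟨‖v‖^2, 4*b.2⟩ : ℂ)‖ + ‖(⟨2*P, 2*W⟩ : ℂ)‖ :=
      (norm_add_le _ _).trans (by
        gcongr
        exact norm_add_le _ _)
    refine tri.trans ?_
    rw [h4a, h4b]
    have hub : ‖u‖ ≤ kor n a := kor_fst_le n a
    have hvb : ‖v‖ ≤ kor n b := kor_fst_le n b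
    have := h3
    nlinarith [norm_nonneg u, norm_nonneg v, kor_nonneg n a, kor_nonneg n b]
  have hX : ‖u+v‖^4 + 16*z^2 ≤ K^4 := by
    have h0 : (0:ℝ) ≤ ‖u+v‖^4 + 16*z^2 := by positivity
    have := Real.sq_sqrt h0
    nlinarith [Real.sqrt_nonneg (‖u+v‖^4 + 16*z^2)]
  have hkor : kor n (hmul n a b) = (‖u+v‖^4 + 16*z^2) ^ ((1:ℝ)/4) := by
    rw [kor]; rfl
  rw [hkor]
  calc (‖u+v‖^4 + 16*z^2) ^ ((1:ℝ)/4) ≤ (K^4) ^ ((1:ℝ)/4) :=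
        Real.rpow_le_rpow (by positivity) hX (by norm_num)
    _ = K := pow4_rpow K hK0

lemma dK_nonneg (n : ℕ) (p q : Hpt n) : 0 ≤ dK n p q := kor_nonneg n _

lemma kor_hinv (n : ℕ) (a : Hpt n) : kor n (hinv n a) = kor n a := by
  rw [kor, kor, hinv]; simp

lemma hinv_hmul_eq (n : ℕ) (p q : Hpt n) :
    hinv n (hmul n (hinv n p) q) = hmul n (hinv n q) p := by
  unfold hmul hinv
  refine Prod.ext (by simp) ?_
  simp only [omegaF_neg_left]
  rw [omegaF_antisymm n q.1 p.1]
  ring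

lemma dK_symm (n : ℕ) (p q : Hpt n) : dK n p q = dK n q p := by
  rw [dK, dK, ← hinv_hmul_eq, kor_hinv]

lemma dK_triangle (n : ℕ) (p q r : Hpt n) : dK n p r ≤ dK n p q + dK n q r := by
  have key : hmul n (hinv n p) r = hmul n (hmul n (hinv n p) q) (hmul n (hinv n q) r) := by
    rw [hmul_assoc, hmul_hinv_cancel_left]
  rw [dK, key]
  exact kor_hmul_le n _ _

def seg (n : ℕ) (s : Hpt n) (V : E n) (t : ℝ) : Hpt n := hmul n s (t • V, (0:ℝ))

lemma seg_zero (n : ℕ) (s : Hpt n) (V : E n) : seg n s V 0 = s := by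
  rw [seg, zero_smul]
  exact hmul_zero n s

lemma seg_fst (n : ℕ) (s : Hpt n) (V : E n) (t : ℝ) : (seg n s V t).1 = s.1 + t • V := rfl

lemma hinv_seg_hmul (n : ℕ) (s : Hpt n) (V : E n) (t₁ t₂ : ℝ) :
    hmul n (hinv n (seg n s V t₁)) (seg n s V t₂) = ((t₂ - t₁) • V, (0:ℝ)) := by
  unfold seg hmul hinv
  refine Prod.ext ?_ ?_
  · show -(s.1 + t₁ • V) + (s.1 + t₂ • V) = (t₂ - t₁) • V
    rw [sub_smul]; abel
  · show -(s.2 + 0 + 1/2 * omegaF n s.1 (t₁ • V)) + (s.2 + 0 + 1/2 * omegaF n s.1 (t₂ • V))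
      + 1/2 * omegaF n (-(s.1 + t₁ • V)) (s.1 + t₂ • V) = 0
    simp only [omegaF_neg_left, omegaF_add_left, omegaF_add_right, omegaF_smul_left,
      omegaF_smul_right, omegaF_self]
    rw [omegaF_antisymm n V s.1]
    ring

lemma dK_seg (n : ℕ) (s : Hpt n) (V : E n) (t₁ t₂ : ℝ) :
    dK n (seg n s V t₁) (seg n s V t₂) = |t₂ - t₁| * ‖V‖ := by
  rw [dK, hinv_seg_hmul, kor_horizontal, norm_smul, Real.norm_eq_abs]

lemma dK_seg_base (n : ℕ) (s : Hpt n) (V : E n) (t : ℝ) :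
    dK n s (seg n s V t) = |t| * ‖V‖ := by
  have h := dK_seg n s V 0 t
  rw [seg_zero] at h
  simpa using h

lemma seg_hasDerivAt (n : ℕ) (f : Hpt n → E n) (D : Hpt n → (E n →L[ℝ] E n))
    (hP : ∀ x, PansuDiffAt n f x (D x)) (s : Hpt n) (V : E n) (t₀ : ℝ) :
    HasDerivAt (fun t => f (seg n s V t) - (seg n s V t).1)
      ((D (seg n s V t₀) - ContinuousLinearMap.id ℝ (E n)) V) t₀ := by
  rw [hasDerivAt_iff_isLittleO, Asymptotics.isLittleO_iff]
  intro C hC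
  by_cases hV : V = 0
  · subst hV
    filter_upwards with t
    simp [seg]
    positivity
  · have hVn : (0:ℝ) < ‖V‖ := norm_pos_iff.mpr hV
    obtain ⟨δ, hδ, hbound⟩ := hP (seg n s V t₀) (C / ‖V‖) (by positivity)
    have hmem : ∀ᶠ t in 𝓝 t₀, |t - t₀| < δ / ‖V‖ := by
      have : Metric.ball t₀ (δ / ‖V‖) ∈ 𝓝 t₀ := Metric.ball_mem_nhds t₀ (by positivity)
      filter_upwards [this] with t ht
      rwa [Metric.mem_ball, Real.dist_eq] at ht
    filter_upwards [hmem] with t ht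
    have hdist : dK n (seg n s V t₀) (seg n s V t) = |t - t₀| * ‖V‖ := dK_seg n s V t₀ t
    have hlt : dK n (seg n s V t₀) (seg n s V t) < δ := by
      rw [hdist]
      calc |t - t₀| * ‖V‖ < (δ / ‖V‖) * ‖V‖ := by
            apply mul_lt_mul_of_pos_right ht hVn
        _ = δ := by field_simp
    have hb := hbound (seg n s V t) hlt
    rw [hinv_seg_hmul] at hb
    have heq : f (seg n s V t) - (seg n s V t).1 - (f (seg n s V t₀) - (seg n s V t₀).1)
        - (t - t₀) • ((D (seg n s V t₀) - ContinuousLinearMap.id ℝ (E n)) V)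
        = f (seg n s V t) - f (seg n s V t₀) - (D (seg n s V t₀)) ((t - t₀) • V) := by
      rw [seg_fst, seg_fst]
      simp only [ContinuousLinearMap.sub_apply, ContinuousLinearMap.id_apply, smul_sub,
        sub_smul, map_add, map_sub, _root_.map_smul]
      abel
    rw [heq]
    calc ‖f (seg n s V t) - f (seg n s V t₀) - (D (seg n s V t₀)) ((t - t₀) • V)‖
        ≤ (C / ‖V‖) * dK n (seg n s V t₀) (seg n s V t) := hb
      _ = C * |t - t₀| := by rw [hdist]; field_simp
      _ = C * ‖t - t₀‖ := by rw [Real.norm_eq_abs]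

lemma seg_estimate (n : ℕ) (f : Hpt n → E n) (D : Hpt n → (E n →L[ℝ] E n))
    (hP : ∀ x, PansuDiffAt n f x (D x)) (s : Hpt n) (V : E n) (C : ℝ)
    (hC : ∀ t ∈ Set.Icc (0:ℝ) 1, ‖D (seg n s V t) - ContinuousLinearMap.id ℝ (E n)‖ ≤ C) :
    ‖(f (seg n s V 1) - (seg n s V 1).1) - (f s - s.1)‖ ≤ C * ‖V‖ := by
  have key := Convex.norm_image_sub_le_of_norm_hasDerivWithin_le
    (f := fun t => f (seg n s V t) - (seg n s V t).1)
    (f' := fun t => (D (seg n s V t) - ContinuousLinearMap.id ℝ (E n)) V)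
    (C := C * ‖V‖) (s := Set.Icc (0:ℝ) 1)
    (fun t _ => (seg_hasDerivAt n f D hP s V t).hasDerivWithinAt)
    (fun t ht => by
      calc ‖(D (seg n s V t) - ContinuousLinearMap.id ℝ (E n)) V‖
          ≤ ‖D (seg n s V t) - ContinuousLinearMap.id ℝ (E n)‖ * ‖V‖ :=
            ContinuousLinearMap.le_opNorm _ _
        _ ≤ C * ‖V‖ := mul_le_mul_of_nonneg_right (hC t ht) (norm_nonneg _))
    (convex_Icc 0 1) (Set.left_mem_Icc.mpr zero_le_one) (Set.right_mem_Icc.mpr zero_le_one)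
  simpa [seg_zero] using key

lemma omegaF_single (n : ℕ) (hn : 1 ≤ n) (a b : ℝ) :
    omegaF n (EuclideanSpace.single (⟨0, by omega⟩ : Fin (2*n)) a)
      (EuclideanSpace.single (⟨1, by omega⟩ : Fin (2*n)) b) = a * b := by
  unfold omegaF
  rw [Finset.sum_eq_single_of_mem (⟨0, hn⟩ : Fin n) (Finset.mem_univ _)]
  · simp [EuclideanSpace.single_apply, Fin.ext_iff]
  · rintro ⟨iv, hiv⟩ _ hi
    have hiv0 : iv ≠ 0 := by
      intro h
      exact hi (by simp [Fin.ext_iff, h])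
    simp only [EuclideanSpace.single_apply, Fin.mk.injEq]
    rw [if_neg (by omega), if_neg (by omega), if_neg (by omega), if_neg (by omega)]
    ring

lemma five_step (n : ℕ) (x : Hpt n) (v u₁ u₂ : E n) :
    seg n (seg n (seg n (seg n (seg n x v 1) u₁ 1) u₂ 1) (-u₁) 1) (-u₂) 1
      = hmul n x (v, omegaF n u₁ u₂) := by
  rw [Prod.ext_iff]
  constructor
  · simp [seg, hmul]
    abel
  · simp only [seg, hmul, one_smul]
    simp only [omegaF_add_left, omegaF_add_right, omegaF_neg_left, omegaF_neg_right,
      omegaF_self]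
    rw [omegaF_antisymm n u₂ u₁]
    ring

end Aux


set_option maxHeartbeats 1000000 in
lemma core (n : ℕ) (f : Hpt n → E n) (D : Hpt n → (E n →L[ℝ] E n))
    (hP : ∀ x, PansuDiffAt n f x (D x))
    (c : ℝ) (hc : 0 < c) (p : Hpt n) (R : ℝ) (hR : 0 < R)
    (hD : ∀ q : Hpt n, dK n p q < 5 * R → ‖D q - ContinuousLinearMap.id ℝ (E n)‖ < c)
    (x y : Hpt n) (hx : dK n p x < R) (hy : dK n p y < R)
    (v u₁ u₂ : E n) (τ σ : ℝ) (hσ0 : 0 ≤ σ)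
    (hw : hmul n (hinv n x) y = (v, τ))
    (hn1 : ‖u₁‖ = σ) (hn2 : ‖u₂‖ = σ)
    (hω : omegaF n u₁ u₂ = τ)
    (hσd : 2 * σ ≤ dK n x y) :
    ‖(f x - x.1) - (f y - y.1)‖ ≤ 3 * c * dK n x y := by
  have hd0 : 0 ≤ dK n x y := dK_nonneg n x y
  have hvd : ‖v‖ ≤ dK n x y := by
    have h := kor_fst_le n (hmul n (hinv n x) y)
    rw [hw] at h
    rw [dK, hw]
    simpa using h
  set y₁ : Hpt n := seg n x v 1 with hy₁
  set y₂ : Hpt n := seg n y₁ u₁ 1 with hy₂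
  set y₃ : Hpt n := seg n y₂ u₂ 1 with hy₃
  set y₄ : Hpt n := seg n y₃ (-u₁) 1 with hy₄
  have hy5 : seg n y₄ (-u₂) 1 = y := by
    rw [hy₄, hy₃, hy₂, hy₁, five_step, hω, ← hw]
    exact hmul_hinv_cancel_left n x y
  have hdle : dK n x y < 2 * R := by
    have h := dK_triangle n x p y
    rw [dK_symm n x p] at h
    linarith
  have hb1 : dK n x y₁ = ‖v‖ := by rw [hy₁, dK_seg_base]; simp
  have hb2 : dK n y₁ y₂ = σ := by rw [hy₂, dK_seg_base, hn1]; simp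
  have hb5 : dK n y₄ y = σ := by rw [← hy5, dK_seg_base, norm_neg, hn2]; simp
  have hpy₁ : dK n p y₁ ≤ dK n p x + ‖v‖ := by
    have h := dK_triangle n p x y₁; rw [hb1] at h; linarith
  have hpy₂ : dK n p y₂ ≤ dK n p y₁ + σ := by
    have h := dK_triangle n p y₁ y₂; rw [hb2] at h; linarith
  have hs1 : ∀ t ∈ Set.Icc (0:ℝ) 1, ‖D (seg n x v t) - ContinuousLinearMap.id ℝ (E n)‖ ≤ c := by
    intro t ht
    apply (hD _ _).le
    have h1 : dK n x (seg n x v t) = |t| * ‖v‖ := dK_seg_base n x v t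
    have h2 : |t| * ‖v‖ ≤ ‖v‖ := by
      have h3 : |t| ≤ 1 := by rw [abs_of_nonneg ht.1]; exact ht.2
      calc |t| * ‖v‖ ≤ 1 * ‖v‖ := mul_le_mul_of_nonneg_right h3 (norm_nonneg v)
        _ = ‖v‖ := one_mul _
    have h4 := dK_triangle n p x (seg n x v t)
    linarith
  have hs2 : ∀ t ∈ Set.Icc (0:ℝ) 1, ‖D (seg n y₁ u₁ t) - ContinuousLinearMap.id ℝ (E n)‖ ≤ c := by
    intro t ht
    apply (hD _ _).le
    have h1 : dK n y₁ (seg n y₁ u₁ t) = |t| * ‖u₁‖ := dK_seg_base n y₁ u₁ t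
    have h2 : |t| * ‖u₁‖ ≤ σ := by
      rw [hn1]
      have h3 : |t| ≤ 1 := by rw [abs_of_nonneg ht.1]; exact ht.2
      calc |t| * σ ≤ 1 * σ := mul_le_mul_of_nonneg_right h3 hσ0
        _ = σ := one_mul _
    have h4 := dK_triangle n p y₁ (seg n y₁ u₁ t)
    linarith
  have hs3 : ∀ t ∈ Set.Icc (0:ℝ) 1, ‖D (seg n y₂ u₂ t) - ContinuousLinearMap.id ℝ (E n)‖ ≤ c := by
    intro t ht
    apply (hD _ _).le
    have h1 : dK n y₂ (seg n y₂ u₂ t) = |t| * ‖u₂‖ := dK_seg_base n y₂ u₂ t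
    have h2 : |t| * ‖u₂‖ ≤ σ := by
      rw [hn2]
      have h3 : |t| ≤ 1 := by rw [abs_of_nonneg ht.1]; exact ht.2
      calc |t| * σ ≤ 1 * σ := mul_le_mul_of_nonneg_right h3 hσ0
        _ = σ := one_mul _
    have h4 := dK_triangle n p y₂ (seg n y₂ u₂ t)
    linarith
  have hs4 : ∀ t ∈ Set.Icc (0:ℝ) 1, ‖D (seg n y₃ (-u₁) t) - ContinuousLinearMap.id ℝ (E n)‖ ≤ c := by
    intro t ht
    apply (hD _ _).le
    have h1 : dK n y₄ (seg n y₃ (-u₁) t) = |t - 1| * σ := by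
      have h := dK_seg n y₃ (-u₁) 1 t
      rw [← hy₄, norm_neg, hn1] at h
      exact h
    have h2 : |t - 1| ≤ 1 := by
      rw [abs_sub_comm, abs_of_nonneg (by linarith [ht.2] : (0:ℝ) ≤ 1 - t)]
      linarith [ht.1]
    have t1 := dK_triangle n p y (seg n y₃ (-u₁) t)
    have t2 := dK_triangle n y y₄ (seg n y₃ (-u₁) t)
    have t3 : dK n y y₄ = σ := by rw [dK_symm]; exact hb5
    have h3 : dK n y₄ (seg n y₃ (-u₁) t) ≤ σ := by
      rw [h1]
      calc |t - 1| * σ ≤ 1 * σ := mul_le_mul_of_nonneg_right h2 hσ0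
        _ = σ := one_mul _
    linarith
  have hs5 : ∀ t ∈ Set.Icc (0:ℝ) 1, ‖D (seg n y₄ (-u₂) t) - ContinuousLinearMap.id ℝ (E n)‖ ≤ c := by
    intro t ht
    apply (hD _ _).le
    have h1 : dK n y (seg n y₄ (-u₂) t) = |t - 1| * σ := by
      have h := dK_seg n y₄ (-u₂) 1 t
      rw [hy5, norm_neg, hn2] at h
      exact h
    have h2 : |t - 1| ≤ 1 := by
      rw [abs_sub_comm, abs_of_nonneg (by linarith [ht.2] : (0:ℝ) ≤ 1 - t)]
      linarith [ht.1]
    have t1 := dK_triangle n p y (seg n y₄ (-u₂) t)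
    have h3 : dK n y (seg n y₄ (-u₂) t) ≤ σ := by
      rw [h1]
      calc |t - 1| * σ ≤ 1 * σ := mul_le_mul_of_nonneg_right h2 hσ0
        _ = σ := one_mul _
    linarith
  have E1 : ‖(f y₁ - y₁.1) - (f x - x.1)‖ ≤ c * ‖v‖ := seg_estimate n f D hP x v c hs1
  have E2 : ‖(f y₂ - y₂.1) - (f y₁ - y₁.1)‖ ≤ c * σ := by
    have h := seg_estimate n f D hP y₁ u₁ c hs2
    rwa [hn1] at h
  have E3 : ‖(f y₃ - y₃.1) - (f y₂ - y₂.1)‖ ≤ c * σ := by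
    have h := seg_estimate n f D hP y₂ u₂ c hs3
    rwa [hn2] at h
  have E4 : ‖(f y₄ - y₄.1) - (f y₃ - y₃.1)‖ ≤ c * σ := by
    have h := seg_estimate n f D hP y₃ (-u₁) c hs4
    rwa [norm_neg, hn1] at h
  have E5 : ‖(f y - y.1) - (f y₄ - y₄.1)‖ ≤ c * σ := by
    have h := seg_estimate n f D hP y₄ (-u₂) c hs5
    rwa [hy5, norm_neg, hn2] at h
  have hsum : (f x - x.1) - (f y - y.1)
      = -((((f y₁ - y₁.1) - (f x - x.1)) + ((f y₂ - y₂.1) - (f y₁ - y₁.1)))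
        + (((f y₃ - y₃.1) - (f y₂ - y₂.1)) + ((f y₄ - y₄.1) - (f y₃ - y₃.1)))
        + ((f y - y.1) - (f y₄ - y₄.1))) := by abel
  rw [hsum, norm_neg]
  have tri : ‖(((f y₁ - y₁.1) - (f x - x.1)) + ((f y₂ - y₂.1) - (f y₁ - y₁.1)))
        + (((f y₃ - y₃.1) - (f y₂ - y₂.1)) + ((f y₄ - y₄.1) - (f y₃ - y₃.1)))
        + ((f y - y.1) - (f y₄ - y₄.1))‖
      ≤ (‖(f y₁ - y₁.1) - (f x - x.1)‖ + ‖(f y₂ - y₂.1) - (f y₁ - y₁.1)‖)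
        + (‖(f y₃ - y₃.1) - (f y₂ - y₂.1)‖ + ‖(f y₄ - y₄.1) - (f y₃ - y₃.1)‖)
        + ‖(f y - y.1) - (f y₄ - y₄.1)‖ := by
    refine (norm_add_le _ _).trans ?_
    gcongr
    refine (norm_add_le _ _).trans ?_
    gcongr <;> exact norm_add_le _ _
  have hcv : c * ‖v‖ ≤ c * dK n x y := mul_le_mul_of_nonneg_left hvd hc.le
  have hcσ : c * σ ≤ c * (dK n x y / 2) := mul_le_mul_of_nonneg_left (by linarith) hc.le
  calc _ ≤ _ := tri
    _ ≤ 3 * c * dK n x y := by linarith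

/-- **Lipschitz control of a `C¹_H` map whose differential is near the identity**
(Lemma 2.3).  If `f : ℍₙ → ℝ^(2n)` is `C¹_H` with `‖D_H f_q − id‖ < c` on the ball
`B_{5R}(p)`, then for all `x, y ∈ B_R(p)`,
`|(f(x) − π(x)) − (f(y) − π(y))| ≤ 3 c d(x,y)`. -/
theorem C1H_near_identity_control (n : ℕ) (hn : 1 ≤ n)
    (f : Hpt n → E n) (D : Hpt n → (E n →L[ℝ] E n)) (hfD : C1H n f D)
    (c : ℝ) (hc : 0 < c) (p : Hpt n) (R : ℝ) (hR : 0 < R)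
    (hD : ∀ q : Hpt n, dK n p q < 5 * R → ‖D q - ContinuousLinearMap.id ℝ (E n)‖ < c) :
    ∀ x y : Hpt n, dK n p x < R → dK n p y < R →
      ‖(f x - x.1) - (f y - y.1)‖ ≤ 3 * c * dK n x y := by
  intro x y hx hy
  obtain ⟨τ, hτ⟩ : ∃ τ, (hmul n (hinv n x) y).2 = τ := ⟨_, rfl⟩
  obtain ⟨v, hv⟩ : ∃ v, (hmul n (hinv n x) y).1 = v := ⟨_, rfl⟩
  have hw : hmul n (hinv n x) y = (v, τ) := by rw [← hv, ← hτ]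
  have hσ0 : 0 ≤ Real.sqrt |τ| := Real.sqrt_nonneg _
  have hσd : 2 * Real.sqrt |τ| ≤ dK n x y := by
    have h := kor_snd_le n (hmul n (hinv n x) y)
    rw [hτ] at h
    exact h
  rcases eq_or_ne τ 0 with h0 | h0
  · -- τ = 0 : u₁ = u₂ = 0 works
    refine core n f D hfD.1 c hc p R hR hD x y hx hy v 0 0 τ 0 le_rfl hw (by simp) (by simp) ?_ ?_
    · rw [h0]
      exact omegaF_zero_right n 0
    · rw [h0] at hσd
      simpa using hσd
  · have hσpos : 0 < Real.sqrt |τ| := Real.sqrt_pos.mpr (abs_pos.mpr h0)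
    set σ := Real.sqrt |τ| with hσ
    set b := τ / σ with hbdef
    have habs : |b| = σ := by
      rw [hbdef, abs_div, abs_of_nonneg (le_of_lt hσpos), div_eq_iff (ne_of_gt hσpos), hσ]
      exact (Real.mul_self_sqrt (abs_nonneg τ)).symm
    have hab : σ * b = τ := by
      rw [hbdef, mul_div_assoc', mul_comm, mul_div_assoc, div_self (ne_of_gt hσpos), mul_one]
    refine core n f D hfD.1 c hc p R hR hD x y hx hy v
      (EuclideanSpace.single (⟨0, by omega⟩ : Fin (2*n)) σ)
      (EuclideanSpace.single (⟨1, by omega⟩ : Fin (2*n)) b)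
      τ σ hσ0 hw ?_ ?_ ?_ hσd
    · rw [EuclideanSpace.norm_single, Real.norm_eq_abs, abs_of_nonneg hσ0]
    · rw [EuclideanSpace.norm_single, Real.norm_eq_abs, habs]
    · rw [omegaF_single n hn, hab]
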